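/- (Proposition 1.) For i = 1,…,n, let X_i ∈ ℝ^{m_i×d} satisfy X_iᵀX_i = I_d, let y_i ∈ ℝ^{m_i}, set θ̄_i = X_iᵀ y_i, and let S = Σ_{i=1}^n θ̄_i θ̄_iᵀ. Let k ≤ d and let W* ∈ ℝ^{d×k} be a matrix whose columns are orthonormal eigenvectors of S corresponding to its k largest eigenvalues, and set v_i* = (W*)ᵀ θ̄_i. Then (W*, (v_i*)) globally minimizes Σ_{i=1}^n ‖X_i W v_i − y_i‖² over all W ∈ ℝ^{d×k} and v_1,…,v_n ∈ ℝ^k; that is, the optimal linear hypernetwork is given by PCA on {θ̄_1,…,θ̄_n}. -/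

import Mathlib

open Matrix BigOperators Finset

section AuxLemmas

lemma sum_filter_lt_eq {d k : ℕ} (hk : k ≤ d) (f : Fin d → ℝ) :
    ∑ j ∈ Finset.univ.filter (fun j : Fin d => (j : ℕ) < k), f j
      = ∑ p : Fin k, f (Fin.castLE hk p) := by
  refine Finset.sum_bij' (fun j hj => (⟨(j : ℕ), (Finset.mem_filter.mp hj).2⟩ : Fin k))
      (fun p _ => Fin.castLE hk p) ?_ ?_ ?_ ?_ ?_
  · intro a ha; simp
  · intro p _; exact Finset.mem_filter.mpr ⟨Finset.mem_univ _, p.isLt⟩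
  · intro a ha; ext; simp
  · intro p _; ext; simp
  · intro a ha; rfl

lemma keyFan {d k : ℕ} (hk : k ≤ d) (lam : Fin d → ℝ) (hlam : Antitone lam)
    (hpos : ∀ j, 0 ≤ lam j) (c : Fin d → ℝ) (hc0 : ∀ j, 0 ≤ c j) (hc1 : ∀ j, c j ≤ 1)
    (hsum : ∑ j, c j ≤ (k : ℝ)) :
    ∑ j, lam j * c j ≤ ∑ p : Fin k, lam (Fin.castLE hk p) := by
  rcases Nat.eq_zero_or_pos k with hk0 | hk0
  · subst hk0
    have hc : ∀ j, c j = 0 := by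
      intro j
      have h0 : ∑ j, c j = 0 :=
        le_antisymm (by simpa using hsum) (Finset.sum_nonneg fun j _ => hc0 j)
      exact (Finset.sum_eq_zero_iff_of_nonneg (fun j _ => hc0 j)).mp h0 j (Finset.mem_univ j)
    simp [hc]
  · have hkd : k - 1 < d := lt_of_lt_of_le (Nat.sub_lt hk0 one_pos) hk
    set km1 : Fin d := ⟨k - 1, hkd⟩ with hkm1
    set A := Finset.univ.filter (fun j : Fin d => (j : ℕ) < k) with hA
    set B := Finset.univ.filter (fun j : Fin d => ¬ (j : ℕ) < k) with hB
    have hsplit : ∀ f : Fin d → ℝ, ∑ j, f j = ∑ j ∈ A, f j + ∑ j ∈ B, f j := by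
      intro f; rw [hA, hB, Finset.sum_filter_add_sum_filter_not]
    have cardA : ∑ _j ∈ A, (1 : ℝ) = (k : ℝ) := by
      rw [hA, sum_filter_lt_eq hk]; simp
    have hB1 : ∑ j ∈ B, lam j * c j ≤ lam km1 * ∑ j ∈ B, c j := by
      rw [Finset.mul_sum]
      refine Finset.sum_le_sum fun j hj => ?_
      have hjk : ¬ (j : ℕ) < k := (Finset.mem_filter.mp hj).2
      have : km1 ≤ j := by simp only [Fin.le_def, hkm1]; omega
      exact mul_le_mul_of_nonneg_right (hlam this) (hc0 j)
    have hB2 : ∑ j ∈ B, c j ≤ (k : ℝ) - ∑ j ∈ A, c j := by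
      have := hsplit c; linarith
    have hB3 : lam km1 * ∑ j ∈ B, c j ≤ ∑ j ∈ A, lam km1 * (1 - c j) := by
      have h1 : lam km1 * ∑ j ∈ B, c j ≤ lam km1 * ((k : ℝ) - ∑ j ∈ A, c j) :=
        mul_le_mul_of_nonneg_left hB2 (hpos km1)
      have h2 : ∑ j ∈ A, lam km1 * (1 - c j) = lam km1 * ((k : ℝ) - ∑ j ∈ A, c j) := by
        rw [← Finset.mul_sum, Finset.sum_sub_distrib, cardA]
      linarith
    have hB4 : ∑ j ∈ A, lam km1 * (1 - c j) ≤ ∑ j ∈ A, lam j * (1 - c j) := by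
      refine Finset.sum_le_sum fun j hj => ?_
      have hjk : (j : ℕ) < k := (Finset.mem_filter.mp hj).2
      have hle : j ≤ km1 := by simp only [Fin.le_def, hkm1]; omega
      exact mul_le_mul_of_nonneg_right (hlam hle) (by linarith [hc1 j])
    have hfinal : ∑ j ∈ A, lam j * c j + ∑ j ∈ A, lam j * (1 - c j) = ∑ j ∈ A, lam j := by
      rw [← Finset.sum_add_distrib]; apply Finset.sum_congr rfl; intro j _; ring
    rw [hsplit (fun j => lam j * c j), ← sum_filter_lt_eq hk lam]
    linarith

lemma proj_bound {d : ℕ} (K : Submodule ℝ (EuclideanSpace ℝ (Fin d)))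
    (θ z : EuclideanSpace ℝ (Fin d)) (hz : z ∈ K) :
    ‖θ‖ ^ 2 - ‖((K.orthogonalProjectionOnto θ) : EuclideanSpace ℝ (Fin d))‖ ^ 2 ≤ ‖θ - z‖ ^ 2 := by
  set p : EuclideanSpace ℝ (Fin d) := ((K.orthogonalProjectionOnto θ) : EuclideanSpace ℝ (Fin d)) with hp
  have hpK : p ∈ K := Submodule.coe_mem _
  have horth : ∀ w ∈ K, inner ℝ (θ - p) w = 0 := fun w hw =>
    K.starProjection_inner_eq_zero θ w hw
  have e1 : ‖θ‖ ^ 2 = ‖θ - p‖ ^ 2 + ‖p‖ ^ 2 := by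
    have h := norm_add_sq_real (θ - p) p
    rw [sub_add_cancel] at h
    rw [h, horth p hpK]; ring
  have e2 : ‖θ - z‖ ^ 2 = ‖θ - p‖ ^ 2 + ‖p - z‖ ^ 2 := by
    have h := norm_add_sq_real (θ - p) (p - z)
    have hx : (θ - p) + (p - z) = θ - z := by abel
    rw [hx] at h
    rw [h, horth (p - z) (Submodule.sub_mem K hpK hz)]; ring
  nlinarith [sq_nonneg ‖p - z‖]

lemma norm_proj_sq {d : ℕ} (K : Submodule ℝ (EuclideanSpace ℝ (Fin d)))
    (b : OrthonormalBasis (Fin (Module.finrank ℝ K)) ℝ K)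
    (θ : EuclideanSpace ℝ (Fin d)) :
    ‖((K.orthogonalProjectionOnto θ) : EuclideanSpace ℝ (Fin d))‖ ^ 2
      = ∑ l, inner ℝ ((b l : K) : EuclideanSpace ℝ (Fin d)) θ ^ 2 := by
  have hob : Orthonormal ℝ (fun l => ((b l : K) : EuclideanSpace ℝ (Fin d))) :=
    b.orthonormal.comp_linearIsometry K.subtypeₗᵢ
  have hrepr := b.orthogonalProjectionOnto_apply_eq_sum θ
  have hcoe : ((K.orthogonalProjectionOnto θ) : EuclideanSpace ℝ (Fin d))
      = ∑ l, inner ℝ ((b l : K) : EuclideanSpace ℝ (Fin d)) θ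
          • ((b l : K) : EuclideanSpace ℝ (Fin d)) := by
    rw [hrepr]
    push_cast [Submodule.coe_sum]
    rfl
  rw [hcoe, ← real_inner_self_eq_norm_sq]
  rw [hob.inner_sum]
  simp [pow_two]

end AuxLemmas

/-- Proposition 1: For clients `i = 1,…,n` with data matrices
`X_i ∈ ℝ^{m_i×d}` satisfying `X_iᵀX_i = I_d`, labels `y_i ∈ ℝ^{m_i}`, ERM solutions
`θ̄_i = X_iᵀ y_i`, and second-moment matrix `S = Σ_i θ̄_i θ̄_iᵀ`: if `k ≤ d`,
`W* ∈ ℝ^{d×k}` has as columns orthonormal eigenvectors of `S` corresponding to its `k`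
largest eigenvalues (listed decreasingly by `lam` with orthonormal eigenbasis `u`), and
`v_i* = (W*)ᵀ θ̄_i`, then `(W*, (v_i*))` globally minimizes
`Σ_i ‖X_i W v_i − y_i‖²` over all `W ∈ ℝ^{d×k}` and `v_1,…,v_n ∈ ℝ^k`;
i.e. the optimal linear hypernetwork is given by PCA on `{θ̄_1,…,θ̄_n}`. -/
theorem stmt8 {n d k : ℕ} (hk : k ≤ d) (m : Fin n → ℕ)
    (X : ∀ i, Matrix (Fin (m i)) (Fin d) ℝ)
    (hX : ∀ i, (X i)ᵀ * X i = 1)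
    (y : ∀ i, Fin (m i) → ℝ)
    (θbar : Fin n → Fin d → ℝ) (hθbar : ∀ i, θbar i = (X i)ᵀ.mulVec (y i))
    (S : Matrix (Fin d) (Fin d) ℝ)
    (hS : S = ∑ i, Matrix.vecMulVec (θbar i) (θbar i))
    (lam : Fin d → ℝ) (hlam : Antitone lam)
    (u : Fin d → Fin d → ℝ)
    (hortho : ∀ i j, u i ⬝ᵥ u j = if i = j then (1 : ℝ) else 0)
    (heig : ∀ i, S.mulVec (u i) = lam i • u i)
    (Wstar : Matrix (Fin d) (Fin k) ℝ)
    (hWstar : Wstar = Matrix.of fun r c => u (Fin.castLE hk c) r)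
    (vstar : Fin n → Fin k → ℝ)
    (hvstar : ∀ i, vstar i = Wstarᵀ.mulVec (θbar i)) :
    ∀ (W : Matrix (Fin d) (Fin k) ℝ) (v : Fin n → Fin k → ℝ),
      ∑ i, ∑ j, ((X i).mulVec (Wstar.mulVec (vstar i)) - y i) j ^ 2
        ≤ ∑ i, ∑ j, ((X i).mulVec (W.mulVec (v i)) - y i) j ^ 2 := by
  intro W v
  -- Step A: objective rewriting
  have key : ∀ (i : Fin n) (z : Fin d → ℝ),
      ∑ j, ((X i).mulVec z - y i) j ^ 2
        = (z - θbar i) ⬝ᵥ (z - θbar i) + (y i ⬝ᵥ y i - θbar i ⬝ᵥ θbar i) := by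
    intro i z
    have h1 : (X i).mulVec z ⬝ᵥ (X i).mulVec z = z ⬝ᵥ z := by
      rw [Matrix.dotProduct_mulVec, ← Matrix.mulVec_transpose, Matrix.mulVec_mulVec, hX i,
        Matrix.one_mulVec]
    have h2 : (X i).mulVec z ⬝ᵥ y i = z ⬝ᵥ θbar i := by
      rw [dotProduct_comm, Matrix.dotProduct_mulVec, ← Matrix.mulVec_transpose,
        ← hθbar i, dotProduct_comm]
    have lhs : ∑ j, ((X i).mulVec z - y i) j ^ 2
        = ((X i).mulVec z - y i) ⬝ᵥ ((X i).mulVec z - y i) := by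
      simp [dotProduct, pow_two]
    rw [lhs]
    simp only [sub_dotProduct, dotProduct_sub]
    rw [h1, h2, dotProduct_comm (y i) ((X i).mulVec z), h2,
      dotProduct_comm (θbar i) z]
    ring
  -- entries of S
  have hSentry : ∀ r s, S r s = ∑ i, θbar i r * θbar i s := by
    intro r s; rw [hS]; simp [Matrix.sum_apply, Matrix.vecMulVec_apply]
  -- quadratic form of S
  have quadS : ∀ w : Fin d → ℝ, ∑ i, (θbar i ⬝ᵥ w) ^ 2 = w ⬝ᵥ S.mulVec w := by
    intro w
    have rhs : w ⬝ᵥ S.mulVec w = ∑ r, ∑ s, (w r * w s) * S r s := by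
      simp only [dotProduct, Matrix.mulVec, Finset.mul_sum]
      exact Finset.sum_congr rfl fun r _ => Finset.sum_congr rfl fun s _ => by ring
    rw [rhs]
    calc ∑ i, (θbar i ⬝ᵥ w) ^ 2
        = ∑ i, ∑ r, ∑ s, (w r * w s) * (θbar i r * θbar i s) := by
          refine Finset.sum_congr rfl fun i _ => ?_
          rw [pow_two, dotProduct, Finset.sum_mul_sum]
          exact Finset.sum_congr rfl fun r _ => Finset.sum_congr rfl fun s _ => by ring
      _ = ∑ r, ∑ i, ∑ s, (w r * w s) * (θbar i r * θbar i s) := Finset.sum_comm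
      _ = ∑ r, ∑ s, ∑ i, (w r * w s) * (θbar i r * θbar i s) :=
          Finset.sum_congr rfl fun r _ => Finset.sum_comm
      _ = ∑ r, ∑ s, (w r * w s) * S r s := by
          refine Finset.sum_congr rfl fun r _ => Finset.sum_congr rfl fun s _ => ?_
          rw [hSentry, Finset.mul_sum]
  have lam_eq : ∀ j, u j ⬝ᵥ S.mulVec (u j) = lam j := by
    intro j
    rw [heig j, dotProduct_smul, hortho j j]
    simp
  have lam_nonneg : ∀ j, 0 ≤ lam j := by
    intro j
    rw [← lam_eq j, ← quadS (u j)]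
    exact Finset.sum_nonneg fun i _ => sq_nonneg _
  -- completeness of the eigenbasis
  have hcomp : ∀ s r : Fin d, ∑ j, u j s * u j r = if s = r then 1 else 0 := by
    have hU : (Matrix.of u) * (Matrix.of u)ᵀ = 1 := by
      ext i j
      simp only [Matrix.mul_apply, Matrix.transpose_apply, Matrix.of_apply, Matrix.one_apply]
      exact hortho i j
    have hU2 : (Matrix.of u)ᵀ * (Matrix.of u) = 1 := mul_eq_one_comm.mp hU
    intro s r
    have := congrFun (congrFun hU2 s) r
    simpa [Matrix.mul_apply, Matrix.transpose_apply, Matrix.of_apply, Matrix.one_apply]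
      using this
  have expand_w : ∀ (w : Fin d → ℝ) (r : Fin d), ∑ j, (u j ⬝ᵥ w) * u j r = w r := by
    intro w r
    calc ∑ j, (u j ⬝ᵥ w) * u j r = ∑ j, ∑ s, w s * (u j s * u j r) := by
          refine Finset.sum_congr rfl fun j _ => ?_
          rw [dotProduct, Finset.sum_mul]
          exact Finset.sum_congr rfl fun s _ => by ring
      _ = ∑ s, ∑ j, w s * (u j s * u j r) := Finset.sum_comm
      _ = ∑ s, w s * ∑ j, u j s * u j r := by
          exact Finset.sum_congr rfl fun s _ => by rw [Finset.mul_sum]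
      _ = w r := by simp [hcomp]
  have biparseval : ∀ a bb : Fin d → ℝ, ∑ j, (u j ⬝ᵥ a) * (u j ⬝ᵥ bb) = a ⬝ᵥ bb := by
    intro a bb
    calc ∑ j, (u j ⬝ᵥ a) * (u j ⬝ᵥ bb)
        = ∑ j, ∑ r, bb r * ((u j ⬝ᵥ a) * u j r) := by
          refine Finset.sum_congr rfl fun j _ => ?_
          rw [show u j ⬝ᵥ bb = ∑ r, u j r * bb r from rfl, Finset.mul_sum]
          exact Finset.sum_congr rfl fun r _ => by ring
      _ = ∑ r, ∑ j, bb r * ((u j ⬝ᵥ a) * u j r) := Finset.sum_comm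
      _ = ∑ r, bb r * a r := by
          refine Finset.sum_congr rfl fun r _ => ?_
          rw [← Finset.mul_sum, expand_w]
      _ = a ⬝ᵥ bb := by
          rw [show a ⬝ᵥ bb = ∑ r, a r * bb r from rfl]
          exact Finset.sum_congr rfl fun r _ => mul_comm _ _
  have parseval : ∀ w : Fin d → ℝ, ∑ j, (u j ⬝ᵥ w) ^ 2 = w ⬝ᵥ w := by
    intro w
    rw [← biparseval w w]
    exact Finset.sum_congr rfl fun j _ => by rw [pow_two]
  have hsymm : ∀ r s, S r s = S s r := by
    intro r s; rw [hSentry, hSentry]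
    exact Finset.sum_congr rfl fun i _ => mul_comm _ _
  have hSu : ∀ (j : Fin d) (w : Fin d → ℝ), u j ⬝ᵥ S.mulVec w = lam j * (u j ⬝ᵥ w) := by
    intro j w
    have h1 : u j ⬝ᵥ S.mulVec w = S.mulVec (u j) ⬝ᵥ w := by
      simp only [dotProduct, Matrix.mulVec, Finset.mul_sum, Finset.sum_mul]
      rw [Finset.sum_comm]
      exact Finset.sum_congr rfl fun r _ => Finset.sum_congr rfl fun s _ => by
        rw [hsymm r s]; ring
    rw [h1, heig j, smul_dotProduct]
    simp
  have quad_eig : ∀ w : Fin d → ℝ, w ⬝ᵥ S.mulVec w = ∑ j, lam j * (u j ⬝ᵥ w) ^ 2 := by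
    intro w
    rw [← biparseval w (S.mulVec w)]
    refine Finset.sum_congr rfl fun j _ => ?_
    rw [hSu]; ring
  -- Step C: value at (Wstar, vstar)
  have hzstar : ∀ i, Wstar.mulVec (vstar i)
      = fun r => ∑ p : Fin k, (u (Fin.castLE hk p) ⬝ᵥ θbar i) * u (Fin.castLE hk p) r := by
    intro i; funext r
    simp only [hvstar, hWstar, Matrix.mulVec, dotProduct, Matrix.transpose_apply,
      Matrix.of_apply]
    exact Finset.sum_congr rfl fun p _ => by ring
  have hval : ∀ i, (Wstar.mulVec (vstar i) - θbar i) ⬝ᵥ (Wstar.mulVec (vstar i) - θbar i)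
      = θbar i ⬝ᵥ θbar i - ∑ p : Fin k, (u (Fin.castLE hk p) ⬝ᵥ θbar i) ^ 2 := by
    intro i
    set a : Fin k → ℝ := fun p => u (Fin.castLE hk p) ⬝ᵥ θbar i with ha
    set z : Fin d → ℝ := Wstar.mulVec (vstar i) with hzdef
    have hzdot : ∀ x : Fin d → ℝ, z ⬝ᵥ x = ∑ p, a p * (u (Fin.castLE hk p) ⬝ᵥ x) := by
      intro x
      rw [hzdef, hzstar i]
      calc (fun r => ∑ p : Fin k, a p * u (Fin.castLE hk p) r) ⬝ᵥ x
          = ∑ r, (∑ p : Fin k, a p * u (Fin.castLE hk p) r) * x r := rfl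
        _ = ∑ r, ∑ p, a p * (u (Fin.castLE hk p) r * x r) := by
            refine Finset.sum_congr rfl fun r _ => ?_
            rw [Finset.sum_mul]
            exact Finset.sum_congr rfl fun p _ => by ring
        _ = ∑ p, ∑ r, a p * (u (Fin.castLE hk p) r * x r) := Finset.sum_comm
        _ = ∑ p, a p * (u (Fin.castLE hk p) ⬝ᵥ x) := by
            refine Finset.sum_congr rfl fun p _ => ?_
            rw [show u (Fin.castLE hk p) ⬝ᵥ x = ∑ r, u (Fin.castLE hk p) r * x r from rfl,
              Finset.mul_sum]
    have hupz : ∀ p : Fin k, u (Fin.castLE hk p) ⬝ᵥ z = a p := by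
      intro p
      rw [dotProduct_comm, hzdot]
      have hif : ∀ q : Fin k, u (Fin.castLE hk q) ⬝ᵥ u (Fin.castLE hk p)
          = if q = p then 1 else 0 := by
        intro q
        rw [hortho]
        congr 1
        simp [Fin.ext_iff]
      rw [Finset.sum_congr rfl fun q _ => by rw [hif q]]
      simp
    have hzz : z ⬝ᵥ z = ∑ p, a p ^ 2 := by
      rw [hzdot z]
      exact Finset.sum_congr rfl fun p _ => by rw [hupz p, pow_two]
    have hzt : z ⬝ᵥ θbar i = ∑ p, a p ^ 2 := by
      rw [hzdot (θbar i)]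
      refine Finset.sum_congr rfl fun p _ => ?_
      have hap : u (Fin.castLE hk p) ⬝ᵥ θbar i = a p := rfl
      rw [hap, pow_two]
    simp only [sub_dotProduct, dotProduct_sub]
    rw [hzz, hzt, dotProduct_comm (θbar i) z, hzt]
    ring
  -- total value at the optimum
  have lhs_val : ∑ i, (Wstar.mulVec (vstar i) - θbar i) ⬝ᵥ (Wstar.mulVec (vstar i) - θbar i)
      = ∑ i, θbar i ⬝ᵥ θbar i - ∑ p : Fin k, lam (Fin.castLE hk p) := by
    rw [Finset.sum_congr rfl fun i (_ : i ∈ Finset.univ) => hval i, Finset.sum_sub_distrib]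
    congr 1
    rw [Finset.sum_comm]
    refine Finset.sum_congr rfl fun p _ => ?_
    rw [Finset.sum_congr rfl fun i (_ : i ∈ Finset.univ) => by
      rw [dotProduct_comm (u (Fin.castLE hk p)) (θbar i)], quadS, lam_eq]
  -- Step D: lower bound for arbitrary (W, v)
  set L := (WithLp.linearEquiv 2 ℝ (Fin d → ℝ)).symm with hL
  have hinner : ∀ x w : Fin d → ℝ, inner ℝ (L x) (L w) = x ⬝ᵥ w := by
    intro x w
    simp [PiLp.inner_apply, RCLike.inner_apply, dotProduct, hL, WithLp.linearEquiv, mul_comm]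
  have hnorm : ∀ x : Fin d → ℝ, ‖L x‖ ^ 2 = x ⬝ᵥ x := by
    intro x; rw [← real_inner_self_eq_norm_sq, hinner]
  set f : Fin k → EuclideanSpace ℝ (Fin d) := fun p => L (fun r => W r p) with hf
  set K := Submodule.span ℝ (Set.range f) with hKdef
  have hfr : Module.finrank ℝ K ≤ k := by
    simpa [Set.finrank] using finrank_range_le_card f
  have hmem : ∀ i, L (W.mulVec (v i)) ∈ K := by
    intro i
    have hdecomp : W.mulVec (v i) = ∑ p, v i p • (fun r => W r p) := by
      funext r
      rw [show (W.mulVec (v i)) r = ∑ p, W r p * v i p from rfl]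
      rw [Finset.sum_apply]
      exact Finset.sum_congr rfl fun p _ => by simp [mul_comm]
    rw [hdecomp, map_sum]
    refine Submodule.sum_mem _ fun p _ => ?_
    rw [_root_.map_smul]
    exact Submodule.smul_mem _ _ (Submodule.subset_span ⟨p, rfl⟩)
  set b := stdOrthonormalBasis ℝ K with hb
  set wv : Fin (Module.finrank ℝ K) → (Fin d → ℝ) :=
    fun l => L.symm ((b l : K) : EuclideanSpace ℝ (Fin d)) with hwv
  have hLwv : ∀ l, L (wv l) = ((b l : K) : EuclideanSpace ℝ (Fin d)) :=
    fun l => L.apply_symm_apply _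
  have hob : Orthonormal ℝ (fun l => ((b l : K) : EuclideanSpace ℝ (Fin d))) :=
    b.orthonormal.comp_linearIsometry K.subtypeₗᵢ
  have hwvnorm : ∀ l, wv l ⬝ᵥ wv l = 1 := by
    intro l
    rw [← hnorm (wv l), hLwv l, hob.1 l, one_pow]
  set c : Fin d → ℝ := fun j => ∑ l, (u j ⬝ᵥ wv l) ^ 2 with hc
  have hc0 : ∀ j, 0 ≤ c j := fun j => Finset.sum_nonneg fun l _ => sq_nonneg _
  have hc1 : ∀ j, c j ≤ 1 := by
    intro j
    have hb1 := hob.sum_inner_products_le (L (u j)) (s := Finset.univ)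
    have huj : ‖L (u j)‖ ^ 2 = 1 := by
      rw [hnorm, hortho j j]; simp
    calc c j = ∑ l, ‖inner ℝ ((b l : K) : EuclideanSpace ℝ (Fin d)) (L (u j))‖ ^ 2 := by
          refine Finset.sum_congr rfl fun l _ => ?_
          rw [← hLwv l, hinner, Real.norm_eq_abs, sq_abs, dotProduct_comm]
      _ ≤ ‖L (u j)‖ ^ 2 := hb1
      _ = 1 := huj
  have hcsum : ∑ j, c j ≤ (k : ℝ) := by
    have heq : ∑ j, c j = (Module.finrank ℝ K : ℝ) := by
      calc ∑ j, c j = ∑ l, ∑ j, (u j ⬝ᵥ wv l) ^ 2 := Finset.sum_comm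
        _ = ∑ l : Fin (Module.finrank ℝ K), (1 : ℝ) := by
            refine Finset.sum_congr rfl fun l _ => ?_
            rw [parseval, hwvnorm]
        _ = (Module.finrank ℝ K : ℝ) := by simp
    rw [heq]
    exact_mod_cast hfr
  have hlow : ∀ i, θbar i ⬝ᵥ θbar i - ∑ l, (wv l ⬝ᵥ θbar i) ^ 2
      ≤ (W.mulVec (v i) - θbar i) ⬝ᵥ (W.mulVec (v i) - θbar i) := by
    intro i
    have hp := proj_bound K (L (θbar i)) (L (W.mulVec (v i))) (hmem i)
    have hnp := norm_proj_sq K b (L (θbar i))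
    have e1 : ‖L (θbar i)‖ ^ 2 = θbar i ⬝ᵥ θbar i := hnorm _
    have e2 : ‖L (θbar i) - L (W.mulVec (v i))‖ ^ 2
        = (W.mulVec (v i) - θbar i) ⬝ᵥ (W.mulVec (v i) - θbar i) := by
      rw [← map_sub, hnorm]
      rw [show θbar i - W.mulVec (v i) = -(W.mulVec (v i) - θbar i) from (neg_sub _ _).symm]
      rw [neg_dotProduct, dotProduct_neg, neg_neg]
    have e3 : ∑ l, inner ℝ ((b l : K) : EuclideanSpace ℝ (Fin d)) (L (θbar i)) ^ 2
        = ∑ l, (wv l ⬝ᵥ θbar i) ^ 2 := by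
      refine Finset.sum_congr rfl fun l _ => ?_
      rw [← hLwv l, hinner]
    rw [e1, e2] at hp
    rw [e3] at hnp
    rw [hnp] at hp
    exact hp
  have rhs_bound : ∑ i, θbar i ⬝ᵥ θbar i - ∑ p : Fin k, lam (Fin.castLE hk p)
      ≤ ∑ i, (W.mulVec (v i) - θbar i) ⬝ᵥ (W.mulVec (v i) - θbar i) := by
    have h1 : ∑ i, (θbar i ⬝ᵥ θbar i - ∑ l, (wv l ⬝ᵥ θbar i) ^ 2)
        ≤ ∑ i, (W.mulVec (v i) - θbar i) ⬝ᵥ (W.mulVec (v i) - θbar i) :=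
      Finset.sum_le_sum fun i _ => hlow i
    have h2 : ∑ i, ∑ l, (wv l ⬝ᵥ θbar i) ^ 2 = ∑ j, lam j * c j := by
      calc ∑ i, ∑ l, (wv l ⬝ᵥ θbar i) ^ 2
          = ∑ l, ∑ i, (wv l ⬝ᵥ θbar i) ^ 2 := Finset.sum_comm
        _ = ∑ l, wv l ⬝ᵥ S.mulVec (wv l) := by
            refine Finset.sum_congr rfl fun l _ => ?_
            rw [← quadS (wv l)]
            exact Finset.sum_congr rfl fun i _ => by rw [dotProduct_comm]
        _ = ∑ l, ∑ j, lam j * (u j ⬝ᵥ wv l) ^ 2 :=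
            Finset.sum_congr rfl fun l _ => quad_eig (wv l)
        _ = ∑ j, ∑ l, lam j * (u j ⬝ᵥ wv l) ^ 2 := Finset.sum_comm
        _ = ∑ j, lam j * c j := by
            refine Finset.sum_congr rfl fun j _ => ?_
            rw [hc, ← Finset.mul_sum]
      
    have h3 : ∑ j, lam j * c j ≤ ∑ p : Fin k, lam (Fin.castLE hk p) :=
      keyFan hk lam hlam lam_nonneg c hc0 hc1 hcsum
    have h4 : ∑ i, (θbar i ⬝ᵥ θbar i - ∑ l, (wv l ⬝ᵥ θbar i) ^ 2)
        = ∑ i, θbar i ⬝ᵥ θbar i - ∑ i, ∑ l, (wv l ⬝ᵥ θbar i) ^ 2 :=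
      Finset.sum_sub_distrib _ _
    rw [h4, h2] at h1
    linarith
  -- final assembly
  have e_lhs : ∑ i, ∑ j, ((X i).mulVec (Wstar.mulVec (vstar i)) - y i) j ^ 2
      = ∑ i, ((Wstar.mulVec (vstar i) - θbar i) ⬝ᵥ (Wstar.mulVec (vstar i) - θbar i)
          + (y i ⬝ᵥ y i - θbar i ⬝ᵥ θbar i)) :=
    Finset.sum_congr rfl fun i _ => key i _
  have e_rhs : ∑ i, ∑ j, ((X i).mulVec (W.mulVec (v i)) - y i) j ^ 2
      = ∑ i, ((W.mulVec (v i) - θbar i) ⬝ᵥ (W.mulVec (v i) - θbar i)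
          + (y i ⬝ᵥ y i - θbar i ⬝ᵥ θbar i)) :=
    Finset.sum_congr rfl fun i _ => key i _
  rw [e_lhs, e_rhs, Finset.sum_add_distrib, Finset.sum_add_distrib]
  have := lhs_val
  linarith
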